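/- Let p be an odd prime, k ≥ 2, and let q be a positive integer not divisible by p. If p divides ord_{p^k}(q), then m(q, p^k) = m(q, p^{k−1}). -/

import Mathlib

def SumPowSet (q e : ℕ) : Set ℕ :=
  {t | 0 < t ∧ ∃ a : Fin t → ℕ, e ∣ ∑ i, q ^ a i}

def OrdSet (q e : ℕ) : Set ℕ :=
  {s | 0 < s ∧ q ^ s ≡ 1 [MOD e]}


lemma L0 (p : ℕ) (hp0 : (p:ℤ) ≠ 0) (A T : ℤ) (hA : (p:ℤ) ∣ A) (hT : (p:ℤ) ∣ T) :
    ∀ K : ℕ, (p:ℤ)^K ∣ A*p + A^2*T → (p:ℤ)^(K-1) ∣ A := by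
  intro K
  induction K with
  | zero => simp
  | succ K ih =>
    intro h
    rcases Nat.eq_zero_or_pos K with h0 | hK1
    · simp [h0]
    rcases eq_or_lt_of_le (show 1 ≤ K from hK1) with h1 | hK2
    · simpa [← h1] using hA
    · have hIH : (p:ℤ)^(K-1) ∣ A := ih (dvd_trans (pow_dvd_pow _ (Nat.le_succ K)) h)
      have h2 : (p:ℤ)^(K+1) ∣ A^2*T := by
        have hd : (p:ℤ)^(K-1) * (p:ℤ)^(K-1) * p ∣ A * A * T :=
          mul_dvd_mul (mul_dvd_mul hIH hIH) hT
        have he : (p:ℤ)^(K+1) ∣ (p:ℤ)^(K-1) * (p:ℤ)^(K-1) * p := by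
          rw [← pow_add, ← pow_succ]
          exact pow_dvd_pow _ (by omega)
        calc (p:ℤ)^(K+1) ∣ (p:ℤ)^(K-1) * (p:ℤ)^(K-1) * p := he
          _ ∣ A * A * T := hd
          _ = A^2 * T := by ring
      have h3 : (p:ℤ)^(K+1) ∣ A*p := by
        have := dvd_sub h h2
        simpa using this
      have h4 : (p:ℤ)^K * p ∣ A * p := by rwa [← pow_succ]
      simpa using (mul_dvd_mul_iff_right hp0).mp h4

lemma L1 (p : ℕ) (hp : p.Prime) (hodd : Odd p) (x : ℤ) (K : ℕ)
    (h1 : (p:ℤ) ∣ x - 1) (hK : (p:ℤ)^K ∣ x^p - 1) : (p:ℤ)^(K-1) ∣ x - 1 := by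
  set A := x - 1 with hA
  set g : ℕ → ℤ := fun i => ∑ j ∈ Finset.range i, x^j with hg
  have hxi : ∀ i : ℕ, x^i - 1 = A * g i := by
    intro i
    rw [mul_comm]
    exact (geom_sum_mul x i).symm
  have hdvd1 : ∀ i : ℕ, (p:ℤ) ∣ x^i - 1 := fun i => (hxi i) ▸ Dvd.dvd.mul_right h1 (g i)
  -- g p = p + A * T
  set T : ℤ := ∑ i ∈ Finset.range p, g i with hT
  have hgp : A * g p = A * p + A^2 * T := by
    have h5 : g p - p = A * T := by
      have : g p - (p:ℤ) = ∑ i ∈ Finset.range p, (x^i - 1) := by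
        rw [Finset.sum_sub_distrib]
        simp [hg]
      rw [this, hT, Finset.mul_sum]
      exact Finset.sum_congr rfl (fun i _ => hxi i)
    have : g p = (p:ℤ) + A * T := by linarith
    rw [this]; ring
  -- p ∣ T
  have hpT : (p:ℤ) ∣ T := by
    have h6 : ∀ i : ℕ, (p:ℤ) ∣ g i - i := by
      intro i
      have : g i - (i:ℤ) = ∑ j ∈ Finset.range i, (x^j - 1) := by
        rw [Finset.sum_sub_distrib]
        simp [hg]
      rw [this]
      exact Finset.dvd_sum (fun j _ => hdvd1 j)
    have h7 : (p:ℤ) ∣ ∑ i ∈ Finset.range p, (i:ℤ) := by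
      have h8 : p ∣ ∑ i ∈ Finset.range p, i := by
        obtain ⟨mm, hmm⟩ := hodd
        have h9 : (∑ i ∈ Finset.range p, i) * 2 = p * mm * 2 := by
          rw [Finset.sum_range_id_mul_two, hmm, Nat.add_sub_cancel]; ring
        exact ⟨mm, Nat.eq_of_mul_eq_mul_right (by norm_num) h9⟩
      have := Int.natCast_dvd_natCast.mpr h8
      push_cast at this
      exact this
    have : T = (∑ i ∈ Finset.range p, (g i - i)) + ∑ i ∈ Finset.range p, (i:ℤ) := by
      rw [← Finset.sum_add_distrib]
      simp [hT]
    rw [this]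
    exact dvd_add (Finset.dvd_sum (fun i _ => h6 i)) h7
  have hxp : x^p - 1 = A * p + A^2 * T := by rw [hxi p, hgp]
  exact L0 p (by exact_mod_cast hp.ne_zero) A T h1 hpT K (hxp ▸ hK)


lemma Lbin (P c : ℤ) : ∀ j : ℕ, ∃ w : ℤ, (1 + P*c)^j = 1 + j*(P*c) + P^2 * w := by
  intro j
  induction j with
  | zero => exact ⟨0, by ring⟩
  | succ j ih =>
    obtain ⟨w, hw⟩ := ih
    refine ⟨j * c^2 + w * (1 + P*c), ?_⟩
    rw [pow_succ, hw]
    push_cast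
    ring

theorem stmt_15 (p : ℕ) (hp : p.Prime) (hodd : Odd p) (k : ℕ) (hk : 2 ≤ k)
    (q : ℕ) (hq : 0 < q) (hpq : ¬ p ∣ q)
    (n : ℕ) (hn : IsLeast (OrdSet q (p ^ k)) n) (hpn : p ∣ n)
    (m m' : ℕ) (hm : IsLeast (SumPowSet q (p ^ k)) m)
    (hm' : IsLeast (SumPowSet q (p ^ (k - 1))) m') :
    m = m' := by
  haveI := Fact.mk hp
  have hppos := hp.pos
  have hp1 := hp.one_lt
  have hpk : (p:ℤ)^(k-1) * p = (p:ℤ)^k := by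
    rw [← pow_succ, Nat.sub_add_cancel (by omega)]
  -- Part 1 : m' ≤ m
  have hle1 : m' ≤ m := by
    apply hm'.2
    obtain ⟨hmpos, a, ha⟩ := hm.1
    exact ⟨hmpos, a, dvd_trans (pow_dvd_pow p (Nat.sub_le k 1)) ha⟩
  -- Part 2 : m ≤ m'
  obtain ⟨hm'pos, a, ha⟩ := hm'.1
  obtain ⟨hnpos, hqn⟩ := hn.1
  set d := n / p with hd
  have hdp : d * p = n := Nat.div_mul_cancel hpn
  have hdpos : 0 < d := Nat.div_pos (Nat.le_of_dvd hnpos hpn) hppos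
  have hdlt : d < n := Nat.div_lt_self hnpos hp1
  have hone_le : ∀ e : ℕ, 1 ≤ q ^ e := fun e => Nat.one_le_pow _ _ hq
  -- p^k ∣ q^n - 1 in ℤ
  have hqnN : p^k ∣ q^n - 1 := (Nat.modEq_iff_dvd' (hone_le n)).mp hqn.symm
  have hqn' : (p:ℤ)^k ∣ (q:ℤ)^n - 1 := by
    have := Int.natCast_dvd_natCast.mpr hqnN
    rwa [Nat.cast_sub (hone_le n), Nat.cast_pow, Nat.cast_pow, Nat.cast_one] at this
  -- F2 : ¬ p^k ∣ q^d - 1 (ℤ)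
  have hF2 : ¬ (p:ℤ)^k ∣ (q:ℤ)^d - 1 := by
    intro hcon
    have hN : p^k ∣ q^d - 1 := by
      rw [← Int.natCast_dvd_natCast, Nat.cast_sub (hone_le d)]
      push_cast
      exact hcon
    have hmem : d ∈ OrdSet q (p^k) := ⟨hdpos, ((Nat.modEq_iff_dvd' (hone_le d)).mpr hN).symm⟩
    exact absurd (hn.2 hmem) (by omega)
  -- p ∣ q^d - 1 (ℤ) via ZMod p
  have h1d : (p:ℤ) ∣ (q:ℤ)^d - 1 := by
    have hyn : (q : ZMod p)^n = 1 := by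
      have : (q:ℕ)^n ≡ 1 [MOD p] := hqn.of_dvd (dvd_pow_self p (by omega))
      have := (ZMod.natCast_eq_natCast_iff _ _ _).mpr this
      push_cast at this
      exact this
    have hyd : (q : ZMod p)^d = 1 := by
      have h1 : ((q:ZMod p)^d)^p = 1 := by rw [← pow_mul, hdp, hyn]
      rw [ZMod.pow_card] at h1
      exact h1
    have : (((q:ℤ)^d - 1 : ℤ) : ZMod p) = 0 := by push_cast [hyd]; ring
    exact (ZMod.intCast_zmod_eq_zero_iff_dvd _ p).mp this
  -- F1 : p^(k-1) ∣ q^d - 1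
  have hF1 : (p:ℤ)^(k-1) ∣ (q:ℤ)^d - 1 := by
    apply L1 p hp hodd ((q:ℤ)^d) k h1d
    rw [← pow_mul, hdp]
    exact hqn'
  obtain ⟨c, hc⟩ := hF1
  have hqd : (q:ℤ)^d = 1 + (p:ℤ)^(k-1) * c := by linarith
  have hpc : ¬ (p:ℤ) ∣ c := by
    intro hcon
    obtain ⟨e, he⟩ := hcon
    exact hF2 ⟨e, by rw [hc, he, ← mul_assoc, hpk]⟩
  -- s
  obtain ⟨s, hs⟩ := ha
  have hsz : ∑ i, (q:ℤ)^(a i) = (p:ℤ)^(k-1) * (s:ℤ) := by exact_mod_cast congrArg (Nat.cast : ℕ → ℤ) hs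
  -- choose j₀
  have hcne : (c : ZMod p) ≠ 0 := fun h => hpc ((ZMod.intCast_zmod_eq_zero_iff_dvd _ p).mp h)
  have hqne : (q : ZMod p) ≠ 0 := fun h => hpq ((ZMod.natCast_eq_zero_iff _ p).mp h)
  let i0 : Fin m' := ⟨0, hm'pos⟩
  set u : ZMod p := (c : ZMod p) * (q : ZMod p)^(a i0) with hu
  have hune : u ≠ 0 := mul_ne_zero hcne (pow_ne_zero _ hqne)
  set j₀ : ℕ := ((-(s : ZMod p)) * u⁻¹).val with hj₀
  have hkey : (p:ℤ) ∣ (s:ℤ) + c * (q:ℤ)^(a i0) * (j₀:ℤ) := by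
    apply (ZMod.intCast_zmod_eq_zero_iff_dvd _ p).mp
    push_cast
    have hval : ((j₀ : ℕ) : ZMod p) = (-(s : ZMod p)) * u⁻¹ := by
      rw [hj₀, ZMod.natCast_val, ZMod.cast_id]
    rw [hval, ← hu]
    field_simp
    ring
  obtain ⟨v, hv⟩ := hkey
  -- the modified exponents
  set t : Fin m' → ℕ := fun i => if i = i0 then j₀ else 0 with ht
  set b : Fin m' → ℕ := fun i => a i + d * t i with hb
  have hterm : ∀ i : Fin m', ∃ w : ℤ, (q:ℤ)^(b i)
      = (q:ℤ)^(a i) + (q:ℤ)^(a i) * ((t i : ℤ) * ((p:ℤ)^(k-1) * c)) + (p:ℤ)^k * w := by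
    intro i
    obtain ⟨w, hw⟩ := Lbin ((p:ℤ)^(k-1)) c (t i)
    refine ⟨(q:ℤ)^(a i) * ((p:ℤ)^(k-2) * w), ?_⟩
    have hP2 : ((p:ℤ)^(k-1))^2 = (p:ℤ)^k * (p:ℤ)^(k-2) := by
      rw [← pow_mul, ← pow_add]
      congr 1
      omega
    calc (q:ℤ)^(b i) = (q:ℤ)^(a i) * ((q:ℤ)^d)^(t i) := by
          rw [hb, pow_add, pow_mul]
      _ = (q:ℤ)^(a i) * (1 + (t i : ℤ)*((p:ℤ)^(k-1)*c) + ((p:ℤ)^(k-1))^2 * w) := by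
          rw [hqd, hw]
      _ = _ := by rw [hP2]; ring
  choose w hw using hterm
  -- conclusion
  have hsum : ∑ i, (q:ℤ)^(b i) = (p:ℤ)^k * ((v:ℤ) + ∑ i, w i) := by
    rw [Finset.sum_congr rfl (fun i _ => hw i)]
    rw [Finset.sum_add_distrib, Finset.sum_add_distrib, ← Finset.mul_sum]
    have hts : ∑ i, (q:ℤ)^(a i) * ((t i : ℤ) * ((p:ℤ)^(k-1) * c))
        = (q:ℤ)^(a i0) * ((j₀:ℤ) * ((p:ℤ)^(k-1) * c)) := by
      rw [ht]
      rw [Finset.sum_eq_single i0]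
      · simp
      · intro i _ hne
        simp [hne]
      · simp
    rw [hts, hsz]
    have : (p:ℤ)^(k-1) * ((s:ℤ) + c * (q:ℤ)^(a i0) * (j₀:ℤ)) = (p:ℤ)^(k-1) * ((p:ℤ) * v) := by
      rw [← hv]
    have h2 : (p:ℤ)^(k-1) * (s:ℤ) + (q:ℤ)^(a i0) * ((j₀:ℤ) * ((p:ℤ)^(k-1) * c))
        = (p:ℤ)^k * v := by
      rw [← hpk]
      linarith [this]
    linarith [h2]
  have hfin : (p:ℤ)^k ∣ ∑ i, (q:ℤ)^(b i) := ⟨_, hsum⟩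
  have hmem : m' ∈ SumPowSet q (p^k) := by
    refine ⟨hm'pos, b, ?_⟩
    rw [← Int.natCast_dvd_natCast]
    push_cast
    exact hfin
  exact le_antisymm (hm.2 hmem) hle1
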